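/- In CB(2,3), the sum over all maximal chains of the product of edge weights equals (α_1 + α_2 + α_3)², where the weight of a cover f·t_{ij} ⋖ f is α_i + ⋯ + α_{j−1} taken in cyclic order (i.e., α_i + ⋯ + α_{j−1} if i < j, and α_i + ⋯ + α_n + α_1 + ⋯ + α_{j−1} if i > j). -/

import Mathlib

open Classical

/-- Membership in `CB(k,n)`: bounded affine permutation of period `n` with `av = k`. -/
def CBmem (n k : ℕ) (f : ℤ → ℤ) : Prop :=
  Function.Bijective f ∧ (∀ i : ℤ, f (i + n) = f i + n) ∧
  (∀ i : ℤ, i ≤ f i ∧ f i ≤ i + n) ∧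
  ∑ i ∈ Finset.Icc (1 : ℤ) (n : ℤ), (f i - i) = (n : ℤ) * k

/-- Number of equivalence classes of inversions (representatives with first
coordinate in `[1,n]`). -/
noncomputable def alen (n : ℕ) (f : ℤ → ℤ) : ℕ :=
  Set.ncard {p : ℤ × ℤ | 1 ≤ p.1 ∧ p.1 ≤ n ∧ p.1 < p.2 ∧ f p.2 < f p.1}

/-- The reflection `t_{ij}`: for `i < j` the transposition of the residue
classes of `i` and `j`; for `i > j` the affine reflection with `t(j) = i − n`
and `t(i) = j + n`, extended `n`-periodically. -/
def tAff (n : ℕ) (i j : ℤ) : ℤ → ℤ := fun a =>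
  if (a - i) % n = 0 then a + (j - i) + (if i < j then 0 else n)
  else if (a - j) % n = 0 then a + (i - j) - (if i < j then 0 else n)
  else a

/-- A cover `g ⋖ f` in `CB(k,n)`: `g = f·t_{ij}` for some `i ≠ j` in `[1,n]`
with `ℓ(g) = ℓ(f) + 1`. -/
def covCB (n : ℕ) (f g : ℤ → ℤ) : Prop :=
  ∃ i j : ℤ, 1 ≤ i ∧ i ≤ n ∧ 1 ≤ j ∧ j ≤ n ∧ i ≠ j ∧
    g = f ∘ tAff n i j ∧ alen n g = alen n f + 1

/-- The indeterminate `α_m`, indexed cyclically modulo `3`. -/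
noncomputable def alpha3 {R : Type*} [CommRing R] (a1 a2 a3 : R) (m : ℤ) : R :=
  if m % 3 = 1 then a1 else if m % 3 = 2 then a2 else a3

/-- The weight of a covering by `t_{ij}` in `CB(2,3)`: the cyclic sum of
`α_i` through `α_{j−1}` (`α_i + ⋯ + α_{j−1}` for `i < j`, and
`α_i + ⋯ + α_3 + α_1 + ⋯ + α_{j−1}` for `i > j`). -/
noncomputable def wt3 {R : Type*} [CommRing R] (a1 a2 a3 : R) (i j : ℤ) : R :=
  if i < j then ∑ r ∈ Finset.Ico i j, alpha3 a1 a2 a3 r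
  else ∑ r ∈ Finset.Ico i (j + 3), alpha3 a1 a2 a3 r

/-- The weight of the cover `g ⋖ f` in `CB(2,3)` (and `0` if `g` is not
covered by `f`): the weight `wt3 i j` of the unique reflection `t_{ij}` with
`g = f·t_{ij}` and `ℓ(g) = ℓ(f) + 1`. -/
noncomputable def covWt3 {R : Type*} [CommRing R] (a1 a2 a3 : R) (f g : ℤ → ℤ) : R :=
  ∑ i ∈ Finset.Icc (1 : ℤ) 3, ∑ j ∈ Finset.Icc (1 : ℤ) 3,
    if i ≠ j ∧ g = f ∘ tAff 3 i j ∧ alen 3 g = alen 3 f + 1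
    then wt3 a1 a2 a3 i j else 0

/-! ### Auxiliary definitions and lemmas -/

/-- A periodic "shift by residue class mod 3" function. -/
def pf (c1 c2 c3 : ℤ) : ℤ → ℤ := fun a =>
  a + (if a % 3 = 1 then c1 else if a % 3 = 2 then c2 else c3)

lemma sum3 {M : Type*} [AddCommMonoid M] (f : ℤ → M) :
    ∑ i ∈ Finset.Icc (1:ℤ) 3, f i = f 1 + (f 2 + f 3) := by
  rw [show Finset.Icc (1:ℤ) 3 = {1,2,3} from by decide,
    Finset.sum_insert (by decide), Finset.sum_insert (by decide), Finset.sum_singleton]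

lemma not_cov_of_ne {g f : ℤ → ℤ} {i j : ℤ}
    (h : ¬(g 1 = (f ∘ tAff 3 i j) 1 ∧ g 2 = (f ∘ tAff 3 i j) 2 ∧ g 3 = (f ∘ tAff 3 i j) 3)) :
    ¬(i ≠ j ∧ g = f ∘ tAff 3 i j ∧ alen 3 g = alen 3 f + 1) := by
  rintro ⟨-, rfl, -⟩; exact h ⟨rfl, rfl, rfl⟩

/-! ### Composition identities -/

lemma e1 : (fun i : ℤ => i + 2) ∘ tAff 3 1 2 = pf 3 1 2 := by
  funext a; simp only [pf, tAff, Function.comp_apply]; push_cast; split_ifs <;> omega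
lemma e2 : (fun i : ℤ => i + 2) ∘ tAff 3 2 3 = pf 2 3 1 := by
  funext a; simp only [pf, tAff, Function.comp_apply]; push_cast; split_ifs <;> omega
lemma e3 : (fun i : ℤ => i + 2) ∘ tAff 3 3 1 = pf 1 2 3 := by
  funext a; simp only [pf, tAff, Function.comp_apply]; push_cast; split_ifs <;> omega
lemma e4 : pf 3 1 2 ∘ tAff 3 2 3 = pf 3 3 0 := by
  funext a; simp only [pf, tAff, Function.comp_apply]; push_cast; split_ifs <;> omega
lemma e5 : pf 3 1 2 ∘ tAff 3 3 2 = pf 3 0 3 := by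
  funext a; simp only [pf, tAff, Function.comp_apply]; push_cast; split_ifs <;> omega
lemma e6 : pf 2 3 1 ∘ tAff 3 1 3 = pf 3 3 0 := by
  funext a; simp only [pf, tAff, Function.comp_apply]; push_cast; split_ifs <;> omega
lemma e7 : pf 2 3 1 ∘ tAff 3 3 1 = pf 0 3 3 := by
  funext a; simp only [pf, tAff, Function.comp_apply]; push_cast; split_ifs <;> omega
lemma e8 : pf 1 2 3 ∘ tAff 3 1 2 = pf 3 0 3 := by
  funext a; simp only [pf, tAff, Function.comp_apply]; push_cast; split_ifs <;> omega
lemma e9 : pf 1 2 3 ∘ tAff 3 2 1 = pf 0 3 3 := by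
  funext a; simp only [pf, tAff, Function.comp_apply]; push_cast; split_ifs <;> omega
lemma e10 : pf 3 1 2 ∘ tAff 3 1 2 = (fun i : ℤ => i + 2) := by
  funext a; simp only [pf, tAff, Function.comp_apply]; push_cast; split_ifs <;> omega
lemma e11 : pf 2 3 1 ∘ tAff 3 2 3 = (fun i : ℤ => i + 2) := by
  funext a; simp only [pf, tAff, Function.comp_apply]; push_cast; split_ifs <;> omega
lemma e12 : pf 1 2 3 ∘ tAff 3 3 1 = (fun i : ℤ => i + 2) := by
  funext a; simp only [pf, tAff, Function.comp_apply]; push_cast; split_ifs <;> omega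

/-! ### Length computations -/

lemma alen_ft : alen 3 (fun i : ℤ => i + 2) = 0 := by
  unfold alen
  convert Set.ncard_empty (ℤ × ℤ)
  ext ⟨p, q⟩
  simp only [Set.mem_setOf_eq, Set.mem_empty_iff_false, iff_false, not_and]
  intro h1 h2 h3; omega

lemma alen_gA : alen 3 (pf 3 1 2) = 1 := by
  unfold alen
  have : {p : ℤ × ℤ | 1 ≤ p.1 ∧ p.1 ≤ (3:ℕ) ∧ p.1 < p.2 ∧ pf 3 1 2 p.2 < pf 3 1 2 p.1}
      = {((1:ℤ),(2:ℤ))} := by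
    ext ⟨p, q⟩
    simp only [Set.mem_setOf_eq, Set.mem_singleton_iff, Prod.mk.injEq]
    constructor
    · rintro ⟨h1, h2, h3, h4⟩
      simp only [pf] at h4; push_cast at h2; split_ifs at h4 <;> omega
    · rintro ⟨rfl, rfl⟩; norm_num [pf]
  rw [this, Set.ncard_singleton]

lemma alen_gB : alen 3 (pf 2 3 1) = 1 := by
  unfold alen
  have : {p : ℤ × ℤ | 1 ≤ p.1 ∧ p.1 ≤ (3:ℕ) ∧ p.1 < p.2 ∧ pf 2 3 1 p.2 < pf 2 3 1 p.1}
      = {((2:ℤ),(3:ℤ))} := by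
    ext ⟨p, q⟩
    simp only [Set.mem_setOf_eq, Set.mem_singleton_iff, Prod.mk.injEq]
    constructor
    · rintro ⟨h1, h2, h3, h4⟩
      simp only [pf] at h4; push_cast at h2; split_ifs at h4 <;> omega
    · rintro ⟨rfl, rfl⟩; norm_num [pf]
  rw [this, Set.ncard_singleton]

lemma alen_gC : alen 3 (pf 1 2 3) = 1 := by
  unfold alen
  have : {p : ℤ × ℤ | 1 ≤ p.1 ∧ p.1 ≤ (3:ℕ) ∧ p.1 < p.2 ∧ pf 1 2 3 p.2 < pf 1 2 3 p.1}
      = {((3:ℤ),(4:ℤ))} := by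
    ext ⟨p, q⟩
    simp only [Set.mem_setOf_eq, Set.mem_singleton_iff, Prod.mk.injEq]
    constructor
    · rintro ⟨h1, h2, h3, h4⟩
      simp only [pf] at h4; push_cast at h2; split_ifs at h4 <;> omega
    · rintro ⟨rfl, rfl⟩; norm_num [pf]
  rw [this, Set.ncard_singleton]

lemma alen_hAB : alen 3 (pf 3 3 0) = 2 := by
  unfold alen
  have : {p : ℤ × ℤ | 1 ≤ p.1 ∧ p.1 ≤ (3:ℕ) ∧ p.1 < p.2 ∧ pf 3 3 0 p.2 < pf 3 3 0 p.1}
      = {((1:ℤ),(3:ℤ)), (2,3)} := by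
    ext ⟨p, q⟩
    simp only [Set.mem_setOf_eq, Set.mem_insert_iff, Set.mem_singleton_iff, Prod.mk.injEq]
    constructor
    · rintro ⟨h1, h2, h3, h4⟩
      simp only [pf] at h4; push_cast at h2; split_ifs at h4 <;> omega
    · rintro (⟨rfl, rfl⟩ | ⟨rfl, rfl⟩) <;> norm_num [pf]
  rw [this, Set.ncard_pair (by norm_num)]

lemma alen_hAC : alen 3 (pf 3 0 3) = 2 := by
  unfold alen
  have : {p : ℤ × ℤ | 1 ≤ p.1 ∧ p.1 ≤ (3:ℕ) ∧ p.1 < p.2 ∧ pf 3 0 3 p.2 < pf 3 0 3 p.1}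
      = {((1:ℤ),(2:ℤ)), (3,5)} := by
    ext ⟨p, q⟩
    simp only [Set.mem_setOf_eq, Set.mem_insert_iff, Set.mem_singleton_iff, Prod.mk.injEq]
    constructor
    · rintro ⟨h1, h2, h3, h4⟩
      simp only [pf] at h4; push_cast at h2; split_ifs at h4 <;> omega
    · rintro (⟨rfl, rfl⟩ | ⟨rfl, rfl⟩) <;> norm_num [pf]
  rw [this, Set.ncard_pair (by norm_num)]

lemma alen_hBC : alen 3 (pf 0 3 3) = 2 := by
  unfold alen
  have : {p : ℤ × ℤ | 1 ≤ p.1 ∧ p.1 ≤ (3:ℕ) ∧ p.1 < p.2 ∧ pf 0 3 3 p.2 < pf 0 3 3 p.1}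
      = {((2:ℤ),(4:ℤ)), (3,4)} := by
    ext ⟨p, q⟩
    simp only [Set.mem_setOf_eq, Set.mem_insert_iff, Set.mem_singleton_iff, Prod.mk.injEq]
    constructor
    · rintro ⟨h1, h2, h3, h4⟩
      simp only [pf] at h4; push_cast at h2; split_ifs at h4 <;> omega
    · rintro (⟨rfl, rfl⟩ | ⟨rfl, rfl⟩) <;> norm_num [pf]
  rw [this, Set.ncard_pair (by norm_num)]

/-! ### Membership in CB(2,3) -/

lemma mem_gA : CBmem 3 2 (pf 3 1 2) := by
  refine ⟨⟨?_, ?_⟩, ?_, ?_, ?_⟩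
  · intro a b h; simp only [pf] at h; split_ifs at h <;> omega
  · intro b
    exact ⟨if b % 3 = 1 then b - 3 else if b % 3 = 2 then b - 2 else b - 1,
      by simp only [pf]; split_ifs <;> omega⟩
  · intro i; simp only [pf]; push_cast; split_ifs <;> omega
  · intro i; simp only [pf]; push_cast; split_ifs <;> omega
  · decide

lemma mem_gB : CBmem 3 2 (pf 2 3 1) := by
  refine ⟨⟨?_, ?_⟩, ?_, ?_, ?_⟩
  · intro a b h; simp only [pf] at h; split_ifs at h <;> omega
  · intro b
    exact ⟨if b % 3 = 1 then b - 1 else if b % 3 = 2 then b - 3 else b - 2,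
      by simp only [pf]; split_ifs <;> omega⟩
  · intro i; simp only [pf]; push_cast; split_ifs <;> omega
  · intro i; simp only [pf]; push_cast; split_ifs <;> omega
  · decide

lemma mem_gC : CBmem 3 2 (pf 1 2 3) := by
  refine ⟨⟨?_, ?_⟩, ?_, ?_, ?_⟩
  · intro a b h; simp only [pf] at h; split_ifs at h <;> omega
  · intro b
    exact ⟨if b % 3 = 1 then b - 2 else if b % 3 = 2 then b - 1 else b - 3,
      by simp only [pf]; split_ifs <;> omega⟩
  · intro i; simp only [pf]; push_cast; split_ifs <;> omega
  · intro i; simp only [pf]; push_cast; split_ifs <;> omega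
  · decide

lemma mem_hAB : CBmem 3 2 (pf 3 3 0) := by
  refine ⟨⟨?_, ?_⟩, ?_, ?_, ?_⟩
  · intro a b h; simp only [pf] at h; split_ifs at h <;> omega
  · intro b
    exact ⟨if b % 3 = 1 then b - 3 else if b % 3 = 2 then b - 3 else b,
      by simp only [pf]; split_ifs <;> omega⟩
  · intro i; simp only [pf]; push_cast; split_ifs <;> omega
  · intro i; simp only [pf]; push_cast; split_ifs <;> omega
  · decide

lemma mem_hAC : CBmem 3 2 (pf 3 0 3) := by
  refine ⟨⟨?_, ?_⟩, ?_, ?_, ?_⟩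
  · intro a b h; simp only [pf] at h; split_ifs at h <;> omega
  · intro b
    exact ⟨if b % 3 = 1 then b - 3 else if b % 3 = 2 then b else b - 3,
      by simp only [pf]; split_ifs <;> omega⟩
  · intro i; simp only [pf]; push_cast; split_ifs <;> omega
  · intro i; simp only [pf]; push_cast; split_ifs <;> omega
  · decide

lemma mem_hBC : CBmem 3 2 (pf 0 3 3) := by
  refine ⟨⟨?_, ?_⟩, ?_, ?_, ?_⟩
  · intro a b h; simp only [pf] at h; split_ifs at h <;> omega
  · intro b
    exact ⟨if b % 3 = 1 then b else if b % 3 = 2 then b - 3 else b - 3,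
      by simp only [pf]; split_ifs <;> omega⟩
  · intro i; simp only [pf]; push_cast; split_ifs <;> omega
  · intro i; simp only [pf]; push_cast; split_ifs <;> omega
  · decide

/-! ### Covering relations -/

lemma cov_ft_gA : covCB 3 (fun i => i + 2) (pf 3 1 2) :=
  ⟨1, 2, by norm_num, by norm_num, by norm_num, by norm_num, by decide, e1.symm,
    by rw [alen_gA, alen_ft]⟩
lemma cov_ft_gB : covCB 3 (fun i => i + 2) (pf 2 3 1) :=
  ⟨2, 3, by norm_num, by norm_num, by norm_num, by norm_num, by decide, e2.symm,
    by rw [alen_gB, alen_ft]⟩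
lemma cov_ft_gC : covCB 3 (fun i => i + 2) (pf 1 2 3) :=
  ⟨3, 1, by norm_num, by norm_num, by norm_num, by norm_num, by decide, e3.symm,
    by rw [alen_gC, alen_ft]⟩
lemma cov_gA_hAB : covCB 3 (pf 3 1 2) (pf 3 3 0) :=
  ⟨2, 3, by norm_num, by norm_num, by norm_num, by norm_num, by decide, e4.symm,
    by rw [alen_hAB, alen_gA]⟩
lemma cov_gA_hAC : covCB 3 (pf 3 1 2) (pf 3 0 3) :=
  ⟨3, 2, by norm_num, by norm_num, by norm_num, by norm_num, by decide, e5.symm,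
    by rw [alen_hAC, alen_gA]⟩
lemma cov_gB_hAB : covCB 3 (pf 2 3 1) (pf 3 3 0) :=
  ⟨1, 3, by norm_num, by norm_num, by norm_num, by norm_num, by decide, e6.symm,
    by rw [alen_hAB, alen_gB]⟩
lemma cov_gB_hBC : covCB 3 (pf 2 3 1) (pf 0 3 3) :=
  ⟨3, 1, by norm_num, by norm_num, by norm_num, by norm_num, by decide, e7.symm,
    by rw [alen_hBC, alen_gB]⟩
lemma cov_gC_hAC : covCB 3 (pf 1 2 3) (pf 3 0 3) :=
  ⟨1, 2, by norm_num, by norm_num, by norm_num, by norm_num, by decide, e8.symm,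
    by rw [alen_hAC, alen_gC]⟩
lemma cov_gC_hBC : covCB 3 (pf 1 2 3) (pf 0 3 3) :=
  ⟨2, 1, by norm_num, by norm_num, by norm_num, by norm_num, by decide, e9.symm,
    by rw [alen_hBC, alen_gC]⟩

/-! ### Weights -/

section Weights
variable {R : Type*} [CommRing R] (a1 a2 a3 : R)

lemma w12 : wt3 a1 a2 a3 1 2 = a1 := by
  rw [wt3, if_pos (by norm_num), show Finset.Ico (1:ℤ) 2 = {1} from by decide,
    Finset.sum_singleton]; norm_num [alpha3]
lemma w23 : wt3 a1 a2 a3 2 3 = a2 := by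
  rw [wt3, if_pos (by norm_num), show Finset.Ico (2:ℤ) 3 = {2} from by decide,
    Finset.sum_singleton]; norm_num [alpha3]
lemma w13 : wt3 a1 a2 a3 1 3 = a1 + a2 := by
  rw [wt3, if_pos (by norm_num), show Finset.Ico (1:ℤ) 3 = {1,2} from by decide,
    Finset.sum_insert (by decide), Finset.sum_singleton]; norm_num [alpha3]
lemma w31 : wt3 a1 a2 a3 3 1 = a3 := by
  rw [wt3, if_neg (by norm_num), show Finset.Ico (3:ℤ) (1+3) = {3} from by decide,
    Finset.sum_singleton]; norm_num [alpha3]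
lemma w21 : wt3 a1 a2 a3 2 1 = a2 + a3 := by
  rw [wt3, if_neg (by norm_num), show Finset.Ico (2:ℤ) (1+3) = {2,3} from by decide,
    Finset.sum_insert (by decide), Finset.sum_singleton]; norm_num [alpha3]
lemma w32 : wt3 a1 a2 a3 3 2 = a3 + a1 := by
  rw [wt3, if_neg (by norm_num), show Finset.Ico (3:ℤ) (2+3) = {3,4} from by decide,
    Finset.sum_insert (by decide), Finset.sum_singleton]; norm_num [alpha3]

lemma cw_ft_gA : covWt3 a1 a2 a3 (fun i => i + 2) (pf 3 1 2) = a1 := by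
  simp only [covWt3, sum3]
  rw [if_neg (not_cov_of_ne (by decide)),
      if_pos ⟨by decide, e1.symm, by rw [alen_gA, alen_ft]⟩,
      if_neg (not_cov_of_ne (by decide)), if_neg (not_cov_of_ne (by decide)),
      if_neg (not_cov_of_ne (by decide)), if_neg (not_cov_of_ne (by decide)),
      if_neg (not_cov_of_ne (by decide)), if_neg (not_cov_of_ne (by decide)),
      if_neg (not_cov_of_ne (by decide)), w12]
  ring

lemma cw_ft_gB : covWt3 a1 a2 a3 (fun i => i + 2) (pf 2 3 1) = a2 := by
  simp only [covWt3, sum3]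
  rw [if_neg (not_cov_of_ne (by decide)), if_neg (not_cov_of_ne (by decide)),
      if_neg (not_cov_of_ne (by decide)), if_neg (not_cov_of_ne (by decide)),
      if_neg (not_cov_of_ne (by decide)),
      if_pos ⟨by decide, e2.symm, by rw [alen_gB, alen_ft]⟩,
      if_neg (not_cov_of_ne (by decide)), if_neg (not_cov_of_ne (by decide)),
      if_neg (not_cov_of_ne (by decide)), w23]
  ring

lemma cw_ft_gC : covWt3 a1 a2 a3 (fun i => i + 2) (pf 1 2 3) = a3 := by
  simp only [covWt3, sum3]
  rw [if_neg (not_cov_of_ne (by decide)), if_neg (not_cov_of_ne (by decide)),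
      if_neg (not_cov_of_ne (by decide)), if_neg (not_cov_of_ne (by decide)),
      if_neg (not_cov_of_ne (by decide)), if_neg (not_cov_of_ne (by decide)),
      if_pos ⟨by decide, e3.symm, by rw [alen_gC, alen_ft]⟩,
      if_neg (not_cov_of_ne (by decide)), if_neg (not_cov_of_ne (by decide)), w31]
  ring

lemma cw_gA_hAB : covWt3 a1 a2 a3 (pf 3 1 2) (pf 3 3 0) = a2 := by
  simp only [covWt3, sum3]
  rw [if_neg (not_cov_of_ne (by decide)), if_neg (not_cov_of_ne (by decide)),
      if_neg (not_cov_of_ne (by decide)), if_neg (not_cov_of_ne (by decide)),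
      if_neg (not_cov_of_ne (by decide)),
      if_pos ⟨by decide, e4.symm, by rw [alen_hAB, alen_gA]⟩,
      if_neg (not_cov_of_ne (by decide)), if_neg (not_cov_of_ne (by decide)),
      if_neg (not_cov_of_ne (by decide)), w23]
  ring

lemma cw_gA_hAC : covWt3 a1 a2 a3 (pf 3 1 2) (pf 3 0 3) = a3 + a1 := by
  simp only [covWt3, sum3]
  rw [if_neg (not_cov_of_ne (by decide)), if_neg (not_cov_of_ne (by decide)),
      if_neg (not_cov_of_ne (by decide)), if_neg (not_cov_of_ne (by decide)),
      if_neg (not_cov_of_ne (by decide)), if_neg (not_cov_of_ne (by decide)),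
      if_neg (not_cov_of_ne (by decide)),
      if_pos ⟨by decide, e5.symm, by rw [alen_hAC, alen_gA]⟩,
      if_neg (not_cov_of_ne (by decide)), w32]
  ring

lemma cw_gB_hAB : covWt3 a1 a2 a3 (pf 2 3 1) (pf 3 3 0) = a1 + a2 := by
  simp only [covWt3, sum3]
  rw [if_neg (not_cov_of_ne (by decide)), if_neg (not_cov_of_ne (by decide)),
      if_pos ⟨by decide, e6.symm, by rw [alen_hAB, alen_gB]⟩,
      if_neg (not_cov_of_ne (by decide)), if_neg (not_cov_of_ne (by decide)),
      if_neg (not_cov_of_ne (by decide)), if_neg (not_cov_of_ne (by decide)),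
      if_neg (not_cov_of_ne (by decide)), if_neg (not_cov_of_ne (by decide)), w13]
  ring

lemma cw_gB_hBC : covWt3 a1 a2 a3 (pf 2 3 1) (pf 0 3 3) = a3 := by
  simp only [covWt3, sum3]
  rw [if_neg (not_cov_of_ne (by decide)), if_neg (not_cov_of_ne (by decide)),
      if_neg (not_cov_of_ne (by decide)), if_neg (not_cov_of_ne (by decide)),
      if_neg (not_cov_of_ne (by decide)), if_neg (not_cov_of_ne (by decide)),
      if_pos ⟨by decide, e7.symm, by rw [alen_hBC, alen_gB]⟩,
      if_neg (not_cov_of_ne (by decide)), if_neg (not_cov_of_ne (by decide)), w31]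
  ring

lemma cw_gC_hAC : covWt3 a1 a2 a3 (pf 1 2 3) (pf 3 0 3) = a1 := by
  simp only [covWt3, sum3]
  rw [if_neg (not_cov_of_ne (by decide)),
      if_pos ⟨by decide, e8.symm, by rw [alen_hAC, alen_gC]⟩,
      if_neg (not_cov_of_ne (by decide)), if_neg (not_cov_of_ne (by decide)),
      if_neg (not_cov_of_ne (by decide)), if_neg (not_cov_of_ne (by decide)),
      if_neg (not_cov_of_ne (by decide)), if_neg (not_cov_of_ne (by decide)),
      if_neg (not_cov_of_ne (by decide)), w12]
  ring

lemma cw_gC_hBC : covWt3 a1 a2 a3 (pf 1 2 3) (pf 0 3 3) = a2 + a3 := by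
  simp only [covWt3, sum3]
  rw [if_neg (not_cov_of_ne (by decide)), if_neg (not_cov_of_ne (by decide)),
      if_neg (not_cov_of_ne (by decide)),
      if_pos ⟨by decide, e9.symm, by rw [alen_hBC, alen_gC]⟩,
      if_neg (not_cov_of_ne (by decide)), if_neg (not_cov_of_ne (by decide)),
      if_neg (not_cov_of_ne (by decide)), if_neg (not_cov_of_ne (by decide)),
      if_neg (not_cov_of_ne (by decide)), w21]
  ring

end Weights

/-! ### Inner sums -/

section Inner
variable {R : Type*} [CommRing R] (a1 a2 a3 : R)

lemma inner_gA :
    (∑ᶠ h : ℤ → ℤ,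
      if CBmem 3 2 (pf 3 1 2) ∧ CBmem 3 2 h ∧
          covCB 3 (fun i => i + 2) (pf 3 1 2) ∧ covCB 3 (pf 3 1 2) h ∧ alen 3 h = 2
      then covWt3 a1 a2 a3 (fun i => i + 2) (pf 3 1 2) * covWt3 a1 a2 a3 (pf 3 1 2) h
      else 0) = a1 * a2 + a1 * (a3 + a1) := by
  classical
  rw [finsum_eq_sum_of_support_subset _
      (s := ({pf 3 3 0, pf 3 0 3} : Finset (ℤ → ℤ))) ?_]
  · rw [Finset.sum_insert (by
        simp only [Finset.mem_singleton]
        intro hcon; exact absurd (congrFun hcon 2) (by decide)), Finset.sum_singleton]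
    rw [if_pos ⟨mem_gA, mem_hAB, cov_ft_gA, cov_gA_hAB, alen_hAB⟩,
        if_pos ⟨mem_gA, mem_hAC, cov_ft_gA, cov_gA_hAC, alen_hAC⟩,
        cw_ft_gA, cw_gA_hAB, cw_gA_hAC]
  · intro h hh
    simp only [Function.mem_support] at hh
    by_contra hmem
    simp only [Finset.coe_insert, Set.mem_insert_iff, Finset.coe_singleton,
      Set.mem_singleton_iff, not_or] at hmem
    obtain ⟨hm1, hm2⟩ := hmem
    apply hh
    apply if_neg
    rintro ⟨-, hmemh, -, ⟨i, j, hi1, hi2, hj1, hj2, hij, hheq, -⟩, hlen2⟩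
    push_cast at hi2 hj2
    interval_cases i <;> interval_cases j <;>
      first
        | exact hij rfl
        | (rw [e4] at hheq; exact hm1 hheq)
        | (rw [e5] at hheq; exact hm2 hheq)
        | (rw [e10] at hheq; rw [hheq, alen_ft] at hlen2; omega)
        | (have b1 := hmemh.2.2.1 1; have b2 := hmemh.2.2.1 2; have b3 := hmemh.2.2.1 3;
           rw [hheq] at b1 b2 b3; revert b1 b2 b3; decide)

lemma inner_gB :
    (∑ᶠ h : ℤ → ℤ,
      if CBmem 3 2 (pf 2 3 1) ∧ CBmem 3 2 h ∧
          covCB 3 (fun i => i + 2) (pf 2 3 1) ∧ covCB 3 (pf 2 3 1) h ∧ alen 3 h = 2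
      then covWt3 a1 a2 a3 (fun i => i + 2) (pf 2 3 1) * covWt3 a1 a2 a3 (pf 2 3 1) h
      else 0) = a2 * (a1 + a2) + a2 * a3 := by
  classical
  rw [finsum_eq_sum_of_support_subset _
      (s := ({pf 3 3 0, pf 0 3 3} : Finset (ℤ → ℤ))) ?_]
  · rw [Finset.sum_insert (by
        simp only [Finset.mem_singleton]
        intro hcon; exact absurd (congrFun hcon 1) (by decide)), Finset.sum_singleton]
    rw [if_pos ⟨mem_gB, mem_hAB, cov_ft_gB, cov_gB_hAB, alen_hAB⟩,
        if_pos ⟨mem_gB, mem_hBC, cov_ft_gB, cov_gB_hBC, alen_hBC⟩,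
        cw_ft_gB, cw_gB_hAB, cw_gB_hBC]
  · intro h hh
    simp only [Function.mem_support] at hh
    by_contra hmem
    simp only [Finset.coe_insert, Set.mem_insert_iff, Finset.coe_singleton,
      Set.mem_singleton_iff, not_or] at hmem
    obtain ⟨hm1, hm2⟩ := hmem
    apply hh
    apply if_neg
    rintro ⟨-, hmemh, -, ⟨i, j, hi1, hi2, hj1, hj2, hij, hheq, -⟩, hlen2⟩
    push_cast at hi2 hj2
    interval_cases i <;> interval_cases j <;>
      first
        | exact hij rfl
        | (rw [e6] at hheq; exact hm1 hheq)
        | (rw [e7] at hheq; exact hm2 hheq)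
        | (rw [e11] at hheq; rw [hheq, alen_ft] at hlen2; omega)
        | (have b1 := hmemh.2.2.1 1; have b2 := hmemh.2.2.1 2; have b3 := hmemh.2.2.1 3;
           rw [hheq] at b1 b2 b3; revert b1 b2 b3; decide)

lemma inner_gC :
    (∑ᶠ h : ℤ → ℤ,
      if CBmem 3 2 (pf 1 2 3) ∧ CBmem 3 2 h ∧
          covCB 3 (fun i => i + 2) (pf 1 2 3) ∧ covCB 3 (pf 1 2 3) h ∧ alen 3 h = 2
      then covWt3 a1 a2 a3 (fun i => i + 2) (pf 1 2 3) * covWt3 a1 a2 a3 (pf 1 2 3) h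
      else 0) = a3 * a1 + a3 * (a2 + a3) := by
  classical
  rw [finsum_eq_sum_of_support_subset _
      (s := ({pf 3 0 3, pf 0 3 3} : Finset (ℤ → ℤ))) ?_]
  · rw [Finset.sum_insert (by
        simp only [Finset.mem_singleton]
        intro hcon; exact absurd (congrFun hcon 1) (by decide)), Finset.sum_singleton]
    rw [if_pos ⟨mem_gC, mem_hAC, cov_ft_gC, cov_gC_hAC, alen_hAC⟩,
        if_pos ⟨mem_gC, mem_hBC, cov_ft_gC, cov_gC_hBC, alen_hBC⟩,
        cw_ft_gC, cw_gC_hAC, cw_gC_hBC]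
  · intro h hh
    simp only [Function.mem_support] at hh
    by_contra hmem
    simp only [Finset.coe_insert, Set.mem_insert_iff, Finset.coe_singleton,
      Set.mem_singleton_iff, not_or] at hmem
    obtain ⟨hm1, hm2⟩ := hmem
    apply hh
    apply if_neg
    rintro ⟨-, hmemh, -, ⟨i, j, hi1, hi2, hj1, hj2, hij, hheq, -⟩, hlen2⟩
    push_cast at hi2 hj2
    interval_cases i <;> interval_cases j <;>
      first
        | exact hij rfl
        | (rw [e8] at hheq; exact hm1 hheq)
        | (rw [e9] at hheq; exact hm2 hheq)
        | (rw [e12] at hheq; rw [hheq, alen_ft] at hlen2; omega)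
        | (have b1 := hmemh.2.2.1 1; have b2 := hmemh.2.2.1 2; have b3 := hmemh.2.2.1 3;
           rw [hheq] at b1 b2 b3; revert b1 b2 b3; decide)

end Inner

/-- In `CB(2,3)`, whose top element is `f_top = [3,4,5]` (`f i = i + 2`) and
whose minimal elements have length `2 = k(n−k)`, the sum over all maximal
chains `f_top ⋗ g ⋗ h` of the products of the edge weights equals
`(α₁ + α₂ + α₃)²`. -/
theorem cb23_weighted_chain_sum {R : Type*} [CommRing R] (a1 a2 a3 : R) :
    (∑ᶠ (g : ℤ → ℤ) (h : ℤ → ℤ),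
      if CBmem 3 2 g ∧ CBmem 3 2 h ∧
          covCB 3 (fun i => i + 2) g ∧ covCB 3 g h ∧ alen 3 h = 2
      then covWt3 a1 a2 a3 (fun i => i + 2) g * covWt3 a1 a2 a3 g h
      else 0) = (a1 + a2 + a3) ^ 2 := by
  classical
  rw [finsum_eq_sum_of_support_subset _
      (s := ({pf 3 1 2, pf 2 3 1, pf 1 2 3} : Finset (ℤ → ℤ))) ?_]
  · rw [Finset.sum_insert (by
        simp only [Finset.mem_insert, Finset.mem_singleton, not_or]
        exact ⟨fun hcon => absurd (congrFun hcon 1) (by decide),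
               fun hcon => absurd (congrFun hcon 1) (by decide)⟩),
      Finset.sum_insert (by
        simp only [Finset.mem_singleton]
        intro hcon; exact absurd (congrFun hcon 1) (by decide)),
      Finset.sum_singleton]
    rw [inner_gA, inner_gB, inner_gC]
    ring
  · intro g hg
    simp only [Function.mem_support] at hg
    by_contra hmem
    simp only [Finset.coe_insert, Set.mem_insert_iff, Finset.coe_singleton,
      Set.mem_singleton_iff, not_or] at hmem
    obtain ⟨hm1, hm2, hm3⟩ := hmem
    apply hg
    apply finsum_eq_zero_of_forall_eq_zero
    intro h
    apply if_neg
    rintro ⟨hmemg, -, ⟨i, j, hi1, hi2, hj1, hj2, hij, hgeq, -⟩, -, -⟩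
    push_cast at hi2 hj2
    interval_cases i <;> interval_cases j <;>
      first
        | exact hij rfl
        | (rw [e1] at hgeq; exact hm1 hgeq)
        | (rw [e2] at hgeq; exact hm2 hgeq)
        | (rw [e3] at hgeq; exact hm3 hgeq)
        | (have b1 := hmemg.2.2.1 1; have b2 := hmemg.2.2.1 2; have b3 := hmemg.2.2.1 3;
           rw [hgeq] at b1 b2 b3; revert b1 b2 b3; decide)
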